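/- Let N ∈ ℕ ∪ {0} and a, b ∈ ℝ. In polar coordinates y = (r cos θ, r sin θ), define φ(y) = (2 r^{N+1}/(1 + r^{2N+2}))·(a·cos((N+1)θ) + b·sin((N+1)θ)). Then Δφ(y) + 8(N+1)² |y|^{2N} (1+|y|^{2N+2})^{−2} φ(y) = 0 for every y ∈ ℝ² ∖ {0}. -/

import Mathlib

/-- The Laplacian `Δ = ∂²/∂y₁² + ∂²/∂y₂²` on `ℝ² ≅ ℂ`. -/
noncomputable def lapC (u : ℂ → ℝ) (y : ℂ) : ℝ :=
  deriv (deriv fun s : ℝ => u (y + (s : ℂ))) 0 +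
  deriv (deriv fun s : ℝ => u (y + (s : ℂ) * Complex.I)) 0

noncomputable def psi (n : ℕ) (a b : ℝ) (z : ℂ) : ℝ :=
  2*(a*(z^n).re + b*(z^n).im)/(1 + (z^n).re^2 + (z^n).im^2)

lemma hcn (y e : ℂ) (m : ℕ) (s : ℝ) :
    HasDerivAt (fun s : ℝ => (y + (s:ℂ)*e)^m) ((m:ℂ) * (y+(s:ℂ)*e)^(m-1) * e) s := by
  have : HasDerivAt (fun z : ℂ => (y + z*e)^m) ((m:ℂ) * (y+(s:ℂ)*e)^(m-1) * e) (s:ℂ) := by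
    simpa using (((hasDerivAt_id (s:ℂ)).mul_const e).const_add y).fun_pow m
  exact this.comp_ofReal

lemma hre (c : ℝ → ℂ) (c' : ℂ) (s : ℝ) (h : HasDerivAt c c' s) :
    HasDerivAt (fun s => (c s).re) c'.re s :=
  (Complex.reCLM.hasFDerivAt.comp_hasDerivAt s h)

lemma him (c : ℝ → ℂ) (c' : ℂ) (s : ℝ) (h : HasDerivAt c c' s) :
    HasDerivAt (fun s => (c s).im) c'.im s :=
  (Complex.imCLM.hasFDerivAt.comp_hasDerivAt s h)

lemma lap_dir (n : ℕ) (a b : ℝ) (y e : ℂ) (p0 q0 A B P2 Q2 : ℝ)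
    (hp0 : p0 = ((y + ((0:ℝ):ℂ)*e)^n).re) (hq0 : q0 = ((y + ((0:ℝ):ℂ)*e)^n).im)
    (hA : A = ((n:ℂ) * (y + ((0:ℝ):ℂ)*e)^(n-1) * e).re)
    (hB : B = ((n:ℂ) * (y + ((0:ℝ):ℂ)*e)^(n-1) * e).im)
    (hP2 : P2 = ((n:ℂ) * (((n-1:ℕ):ℂ) * (y + ((0:ℝ):ℂ)*e)^(n-1-1) * e) * e).re)
    (hQ2 : Q2 = ((n:ℂ) * (((n-1:ℕ):ℂ) * (y + ((0:ℝ):ℂ)*e)^(n-1-1) * e) * e).im) :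
    deriv (deriv fun s : ℝ => psi n a b (y + (s:ℂ)*e)) 0 =
      (2*(a*P2+b*Q2)*(1+p0^2+q0^2) - 2*(a*p0+b*q0)*(2*(A^2+B^2)+2*(p0*P2+q0*Q2)))/(1+p0^2+q0^2)^2
      - 2*(2*(p0*A+q0*B))*(2*(a*A+b*B)*(1+p0^2+q0^2)
          - 2*(a*p0+b*q0)*(2*(p0*A+q0*B)))/(1+p0^2+q0^2)^3 := by
  have hp : ∀ s : ℝ, HasDerivAt (fun s : ℝ => ((y + (s:ℂ)*e)^n).re)
      (((n:ℂ) * (y+(s:ℂ)*e)^(n-1) * e).re) s := fun s => hre _ _ s (hcn y e n s)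
  have hq : ∀ s : ℝ, HasDerivAt (fun s : ℝ => ((y + (s:ℂ)*e)^n).im)
      (((n:ℂ) * (y+(s:ℂ)*e)^(n-1) * e).im) s := fun s => him _ _ s (hcn y e n s)
  have hp1 : ∀ s : ℝ, HasDerivAt (fun s : ℝ => ((n:ℂ) * (y+(s:ℂ)*e)^(n-1) * e).re)
      (((n:ℂ) * (((n-1:ℕ):ℂ) * (y+(s:ℂ)*e)^(n-1-1) * e) * e).re) s := fun s =>
    hre _ _ s (((hcn y e (n-1) s).const_mul (n:ℂ)).mul_const e)
  have hq1 : ∀ s : ℝ, HasDerivAt (fun s : ℝ => ((n:ℂ) * (y+(s:ℂ)*e)^(n-1) * e).im)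
      (((n:ℂ) * (((n-1:ℕ):ℂ) * (y+(s:ℂ)*e)^(n-1-1) * e) * e).im) s := fun s =>
    him _ _ s (((hcn y e (n-1) s).const_mul (n:ℂ)).mul_const e)
  have hg : ∀ s : ℝ, HasDerivAt (fun s : ℝ => psi n a b (y + (s:ℂ)*e))
      ((2*(a*(((n:ℂ)*(y+(s:ℂ)*e)^(n-1)*e).re) + b*(((n:ℂ)*(y+(s:ℂ)*e)^(n-1)*e).im))
          * (1 + ((y+(s:ℂ)*e)^n).re^2 + ((y+(s:ℂ)*e)^n).im^2)
        - 2*(a*((y+(s:ℂ)*e)^n).re + b*((y+(s:ℂ)*e)^n).im)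
          * (2*(((y+(s:ℂ)*e)^n).re * (((n:ℂ)*(y+(s:ℂ)*e)^(n-1)*e).re)
              + ((y+(s:ℂ)*e)^n).im * (((n:ℂ)*(y+(s:ℂ)*e)^(n-1)*e).im))))
        / ((1 + ((y+(s:ℂ)*e)^n).re^2 + ((y+(s:ℂ)*e)^n).im^2)^2)) s := by
    intro s
    have hnum : HasDerivAt (fun s : ℝ => 2*(a*((y+(s:ℂ)*e)^n).re + b*((y+(s:ℂ)*e)^n).im))
        (2*(a*(((n:ℂ)*(y+(s:ℂ)*e)^(n-1)*e).re) + b*(((n:ℂ)*(y+(s:ℂ)*e)^(n-1)*e).im))) s :=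
      (((hp s).const_mul a).add ((hq s).const_mul b)).const_mul 2
    have hden : HasDerivAt (fun s : ℝ => 1 + ((y+(s:ℂ)*e)^n).re^2 + ((y+(s:ℂ)*e)^n).im^2)
        ((2:ℝ)*((y+(s:ℂ)*e)^n).re^(2-1) * (((n:ℂ)*(y+(s:ℂ)*e)^(n-1)*e).re)
          + (2:ℝ)*((y+(s:ℂ)*e)^n).im^(2-1) * (((n:ℂ)*(y+(s:ℂ)*e)^(n-1)*e).im)) s :=
      (((hp s).pow 2).const_add 1).add ((hq s).pow 2)
    have hne : (1 + ((y+(s:ℂ)*e)^n).re^2 + ((y+(s:ℂ)*e)^n).im^2) ≠ 0 := by positivity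
    have h := hnum.fun_div hden hne
    simp only [psi]
    refine h.congr_deriv ?_
    norm_num
    ring
  have hd1 : (deriv fun s : ℝ => psi n a b (y + (s:ℂ)*e)) =
      (fun s : ℝ =>
        (2*(a*(((n:ℂ)*(y+(s:ℂ)*e)^(n-1)*e).re) + b*(((n:ℂ)*(y+(s:ℂ)*e)^(n-1)*e).im))
          * (1 + ((y+(s:ℂ)*e)^n).re^2 + ((y+(s:ℂ)*e)^n).im^2)
        - 2*(a*((y+(s:ℂ)*e)^n).re + b*((y+(s:ℂ)*e)^n).im)
          * (2*(((y+(s:ℂ)*e)^n).re * (((n:ℂ)*(y+(s:ℂ)*e)^(n-1)*e).re)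
              + ((y+(s:ℂ)*e)^n).im * (((n:ℂ)*(y+(s:ℂ)*e)^(n-1)*e).im))))
        / ((1 + ((y+(s:ℂ)*e)^n).re^2 + ((y+(s:ℂ)*e)^n).im^2)^2)) :=
    funext fun s => (hg s).deriv
  rw [hd1]
  have hU1 : HasDerivAt (fun s : ℝ =>
      2*(a*(((n:ℂ)*(y+(s:ℂ)*e)^(n-1)*e).re) + b*(((n:ℂ)*(y+(s:ℂ)*e)^(n-1)*e).im)))
      (2*(a*(((n:ℂ) * (((n-1:ℕ):ℂ) * (y+((0:ℝ):ℂ)*e)^(n-1-1) * e) * e).re)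
        + b*(((n:ℂ) * (((n-1:ℕ):ℂ) * (y+((0:ℝ):ℂ)*e)^(n-1-1) * e) * e).im))) 0 :=
    (((hp1 0).const_mul a).add ((hq1 0).const_mul b)).const_mul 2
  have hU : HasDerivAt (fun s : ℝ => 2*(a*((y+(s:ℂ)*e)^n).re + b*((y+(s:ℂ)*e)^n).im))
      (2*(a*(((n:ℂ)*(y+((0:ℝ):ℂ)*e)^(n-1)*e).re) + b*(((n:ℂ)*(y+((0:ℝ):ℂ)*e)^(n-1)*e).im))) 0 :=
    (((hp 0).const_mul a).add ((hq 0).const_mul b)).const_mul 2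
  have hD : HasDerivAt (fun s : ℝ => 1 + ((y+(s:ℂ)*e)^n).re^2 + ((y+(s:ℂ)*e)^n).im^2)
      ((2:ℝ)*((y+((0:ℝ):ℂ)*e)^n).re^(2-1) * (((n:ℂ)*(y+((0:ℝ):ℂ)*e)^(n-1)*e).re)
        + (2:ℝ)*((y+((0:ℝ):ℂ)*e)^n).im^(2-1) * (((n:ℂ)*(y+((0:ℝ):ℂ)*e)^(n-1)*e).im)) 0 :=
    (((hp 0).pow 2).const_add 1).add ((hq 0).pow 2)
  have hD1 : HasDerivAt (fun s : ℝ =>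
      2*(((y+(s:ℂ)*e)^n).re * (((n:ℂ)*(y+(s:ℂ)*e)^(n-1)*e).re)
        + ((y+(s:ℂ)*e)^n).im * (((n:ℂ)*(y+(s:ℂ)*e)^(n-1)*e).im)))
      (2*(((((n:ℂ)*(y+((0:ℝ):ℂ)*e)^(n-1)*e).re) * (((n:ℂ)*(y+((0:ℝ):ℂ)*e)^(n-1)*e).re)
          + ((y+((0:ℝ):ℂ)*e)^n).re * (((n:ℂ) * (((n-1:ℕ):ℂ) * (y+((0:ℝ):ℂ)*e)^(n-1-1) * e) * e).re))
        + ((((n:ℂ)*(y+((0:ℝ):ℂ)*e)^(n-1)*e).im) * (((n:ℂ)*(y+((0:ℝ):ℂ)*e)^(n-1)*e).im)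
          + ((y+((0:ℝ):ℂ)*e)^n).im * (((n:ℂ) * (((n-1:ℕ):ℂ) * (y+((0:ℝ):ℂ)*e)^(n-1-1) * e) * e).im)))) 0 :=
    (((hp 0).mul (hp1 0)).add ((hq 0).mul (hq1 0))).const_mul 2
  have hnum2 := (hU1.fun_mul hD).fun_sub (hU.fun_mul hD1)
  have hDne : (1 + ((y+((0:ℝ):ℂ)*e)^n).re^2 + ((y+((0:ℝ):ℂ)*e)^n).im^2) ≠ 0 := by positivity
  have hden2 := hD.fun_pow 2
  have hne2 : ((1 + ((y+((0:ℝ):ℂ)*e)^n).re^2 + ((y+((0:ℝ):ℂ)*e)^n).im^2)^2) ≠ 0 := pow_ne_zero _ hDne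
  have h2 := hnum2.fun_div hden2 hne2
  rw [h2.deriv]
  subst hp0 hq0 hA hB hP2 hQ2
  field_simp
  ring

lemma pow_re_im (n : ℕ) (z : ℂ) :
    (z^n).re = ‖z‖ ^ n * Real.cos ((n:ℝ) * z.arg) ∧
    (z^n).im = ‖z‖ ^ n * Real.sin ((n:ℝ) * z.arg) := by
  have h1 : z^n = ((‖z‖ ^ n : ℝ) : ℂ) * Complex.exp ((((n:ℝ) * z.arg : ℝ)) * Complex.I) := by
    conv_lhs => rw [← Complex.norm_mul_exp_arg_mul_I z]
    rw [mul_pow, ← Complex.exp_nat_mul]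
    push_cast
    ring_nf
  rw [h1, Complex.re_ofReal_mul, Complex.im_ofReal_mul,
    Complex.exp_ofReal_mul_I_re, Complex.exp_ofReal_mul_I_im]
  exact ⟨rfl, rfl⟩

lemma psi_eq (n : ℕ) (a b : ℝ) (z : ℂ) :
    psi n a b z = 2 * ‖z‖ ^ n / (1 + ‖z‖ ^ (2*n))
      * (a * Real.cos ((n:ℝ) * z.arg) + b * Real.sin ((n:ℝ) * z.arg)) := by
  obtain ⟨h1, h2⟩ := pow_re_im n z
  have hcs : Real.sin ((n:ℝ) * z.arg)^2 + Real.cos ((n:ℝ) * z.arg)^2 = 1 :=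
    Real.sin_sq_add_cos_sq _
  have hden : (1 : ℝ) + (z^n).re^2 + (z^n).im^2 = 1 + ‖z‖ ^ (2*n) := by
    rw [h1, h2]
    have : ‖z‖ ^ (2*n) = (‖z‖ ^ n)^2 := by
      rw [← pow_mul, mul_comm]
    rw [this]
    nlinarith [hcs]
  have hdpos : (0:ℝ) < 1 + ‖z‖ ^ (2*n) := by positivity
  rw [psi, hden, h1, h2]
  field_simp

lemma sq_re_im_pow (n : ℕ) (z : ℂ) :
    ((z^n).re)^2 + ((z^n).im)^2 = ‖z‖^(2*n) := by
  have h := Complex.sq_norm (z^n)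
  rw [Complex.normSq_apply] at h
  rw [show ((z^n).re)^2 + ((z^n).im)^2
      = (z^n).re*(z^n).re + (z^n).im*(z^n).im from by ring, ← h,
    norm_pow, ← pow_mul, mul_comm]

/-- in polar coordinates `y = (r cos θ, r sin θ)` (i.e. `r = |y|`
and `θ = arg y` on `ℝ² ≅ ℂ`), the functions
`φ(y) = (2r^{N+1}/(1+r^{2N+2}))(a cos((N+1)θ) + b sin((N+1)θ))` lie in the
kernel of the linearized operator `Δ + 8(N+1)²|y|^{2N}(1+|y|^{2N+2})^{-2}` on
`ℝ² ∖ {0}`. -/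
theorem stmt13 (N : ℕ) (a b : ℝ) (φ : ℂ → ℝ)
    (hφ : ∀ y : ℂ, y ≠ 0 →
      φ y = 2 * ‖y‖ ^ (N + 1) / (1 + ‖y‖ ^ (2 * N + 2))
              * (a * Real.cos ((N + 1 : ℝ) * Complex.arg y)
                 + b * Real.sin ((N + 1 : ℝ) * Complex.arg y))) :
    ∀ y : ℂ, y ≠ 0 →
      lapC φ y
        + 8 * (N + 1 : ℝ) ^ 2 * ‖y‖ ^ (2 * N)
            / (1 + ‖y‖ ^ (2 * N + 2)) ^ 2 * φ y = 0 := by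
  intro y hy
  have hφψ : ∀ z : ℂ, z ≠ 0 → φ z = psi (N+1) a b z := by
    intro z hz
    rw [hφ z hz, psi_eq (N+1) a b z]
    rw [show 2*(N+1) = 2*N+2 from by ring]
    push_cast
    ring
  have hcont : ∀ e : ℂ, ∀ᶠ (s:ℝ) in nhds 0, y + (s:ℂ)*e ≠ 0 := by
    intro e
    have hc : ContinuousAt (fun s : ℝ => y + (s:ℂ)*e) 0 := by fun_prop
    exact hc.eventually_ne (by simpa using hy)
  have hL1 : deriv (deriv fun s : ℝ => φ (y+(s:ℂ))) 0
      = deriv (deriv fun s : ℝ => psi (N+1) a b (y+(s:ℂ)*1)) 0 := by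
    have heq : (fun s : ℝ => φ (y+(s:ℂ))) =ᶠ[nhds 0] (fun s : ℝ => psi (N+1) a b (y+(s:ℂ)*1)) := by
      filter_upwards [hcont 1] with s hs
      rw [show y + (s:ℂ) = y + (s:ℂ)*1 from by ring, hφψ _ hs]
    exact heq.deriv.deriv_eq
  have hLI : deriv (deriv fun s : ℝ => φ (y+(s:ℂ)*Complex.I)) 0
      = deriv (deriv fun s : ℝ => psi (N+1) a b (y+(s:ℂ)*Complex.I)) 0 := by
    have heq : (fun s : ℝ => φ (y+(s:ℂ)*Complex.I))
        =ᶠ[nhds 0] (fun s : ℝ => psi (N+1) a b (y+(s:ℂ)*Complex.I)) := by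
      filter_upwards [hcont Complex.I] with s hs
      rw [hφψ _ hs]
    exact heq.deriv.deriv_eq
  have hE1 := lap_dir (N+1) a b y 1 ((y^(N+1)).re) ((y^(N+1)).im)
      ((((N+1:ℕ):ℂ) * y^N).re) ((((N+1:ℕ):ℂ) * y^N).im)
      ((((N+1:ℕ):ℂ) * ((N:ℂ) * y^(N-1))).re) ((((N+1:ℕ):ℂ) * ((N:ℂ) * y^(N-1))).im)
      (by norm_num) (by norm_num) (by norm_num) (by norm_num) (by norm_num) (by norm_num)
  have hEI := lap_dir (N+1) a b y Complex.I ((y^(N+1)).re) ((y^(N+1)).im)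
      ((((N+1:ℕ):ℂ) * y^N * Complex.I).re) ((((N+1:ℕ):ℂ) * y^N * Complex.I).im)
      ((((N+1:ℕ):ℂ) * ((N:ℂ) * y^(N-1) * Complex.I) * Complex.I).re)
      ((((N+1:ℕ):ℂ) * ((N:ℂ) * y^(N-1) * Complex.I) * Complex.I).im)
      (by norm_num) (by norm_num) (by norm_num) (by norm_num) (by norm_num) (by norm_num)
  have hS : ((y^N).re)^2 + ((y^N).im)^2 = ‖y‖^(2*N) := sq_re_im_pow N y
  have hT : ((y^(N+1)).re)^2 + ((y^(N+1)).im)^2 = ‖y‖^(2*N+2) := by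
    rw [sq_re_im_pow (N+1) y]
    ring_nf
  rw [lapC, hL1, hLI, hE1, hEI, hφψ y hy, psi, ← hS, ← hT]
  have hpos : (0:ℝ) < 1 + (y^(N+1)).re^2 + (y^(N+1)).im^2 := by positivity
  simp only [Complex.mul_re, Complex.mul_im, Complex.I_re, Complex.I_im,
    Complex.natCast_re, Complex.natCast_im]
  push_cast
  field_simp
  ring
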